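/- Define p : ℝ \ {1} → ℝ by p(z) = z·(2z − 1)/(1 − z). Then for every z ≠ 1, the first-order ODE (p'(z)·p(z) + 3·p(z) + 2z)·z³ − (p(z) + z)³ = 0 holds. -/

import Mathlib

/-- `p(z) = z(2z − 1)/(1 − z)` solves the reduced first-order ODE
`(p'p + 3p + 2z)·z³ − (p + z)³ = 0` on `ℝ \ {1}`. -/
theorem stmt_15 (p : ℝ → ℝ) (hp : p = fun z => z * (2 * z - 1) / (1 - z)) :
    ∀ z : ℝ, z ≠ 1 →
      (deriv p z * p z + 3 * p z + 2 * z) * z ^ 3 - (p z + z) ^ 3 = 0 := by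
  intro z hz
  have hz1 : (1 : ℝ) - z ≠ 0 := by intro h; apply hz; linarith
  have hnum : HasDerivAt (fun z : ℝ => z * (2 * z - 1)) (1 * (2 * z - 1) + z * 2) z :=
    by simpa [Pi.mul_def] using (hasDerivAt_id z).mul (((hasDerivAt_id z).const_mul 2).sub_const 1)
  have hden : HasDerivAt (fun z : ℝ => 1 - z) (-1) z := by
    simpa using (hasDerivAt_id z).const_sub 1
  have hdiv := hnum.div hden hz1
  have hderiv : deriv p z = ((1 * (2 * z - 1) + z * 2) * (1 - z) - z * (2 * z - 1) * (-1)) / (1 - z) ^ 2 := by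
    subst hp; exact hdiv.deriv
  subst hp; rw [hderiv]
  simp only
  field_simp
  ring
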